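/- Let f : ℝⁿ → ℝ be twice continuously differentiable with L-Lipschitz Hessian on a set containing x^k and x^{k+1}, and suppose x^{k+1} satisfies the cubic-regularization stationarity condition 0 = ∇f(x^k) + ∇²f(x^k)(x^{k+1} − x^k) + (σ_k/2)‖x^{k+1} − x^k‖(x^{k+1} − x^k) with 0 < σ_k ≤ 2L. If dist(·, X) ≤ κ‖∇f(·)‖ holds at x^{k+1} for a set X and constant κ > 0, then dist(x^{k+1}, X) ≤ (3/2)κL‖x^{k+1} − x^k‖². -/

import Mathlib

theorem stmt12 {n : ℕ} (f : EuclideanSpace ℝ (Fin n) → ℝ)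
    (F : Set (EuclideanSpace ℝ (Fin n))) (X : Set (EuclideanSpace ℝ (Fin n)))
    (L σ κ : ℝ) (xk xk1 : EuclideanSpace ℝ (Fin n))
    (hf : ContDiff ℝ 2 f) (hF : Convex ℝ F)
    (hxk : xk ∈ F) (hxk1 : xk1 ∈ F)
    (hL : 0 < L) (hσ : 0 < σ) (hσ2 : σ ≤ 2 * L) (hκ : 0 < κ)
    (hXcl : IsClosed X) (hXne : X.Nonempty)
    (hLip : ∀ z ∈ F, ∀ w ∈ F,
      ‖fderiv ℝ (gradient f) z - fderiv ℝ (gradient f) w‖ ≤ L * ‖z - w‖)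
    (hstat : gradient f xk + (fderiv ℝ (gradient f) xk) (xk1 - xk)
        + (σ / 2 * ‖xk1 - xk‖) • (xk1 - xk) = 0)
    (hEB : Metric.infDist xk1 X ≤ κ * ‖gradient f xk1‖) :
    Metric.infDist xk1 X ≤ 3 / 2 * κ * L * ‖xk1 - xk‖ ^ 2 := by
  set g := gradient f with hg
  set d := xk1 - xk with hd
  set A := fderiv ℝ g xk with hA
  -- gradient is C¹
  have hg1 : ContDiff ℝ 1 g := by
    have h1 : ContDiff ℝ 1 (fderiv ℝ f) := hf.fderiv_right (by norm_num)
    exact ((InnerProductSpace.toDual ℝ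
      (EuclideanSpace ℝ (Fin n))).symm.contDiff).comp h1
  have hgd : Differentiable ℝ g := hg1.differentiable one_ne_zero
  -- segment membership
  have hmem : ∀ t ∈ Set.Icc (0:ℝ) 1, xk + t • d ∈ F := by
    intro t ht
    have : xk + t • d = (1 - t) • xk + t • xk1 := by
      rw [hd]; module
    rw [this]
    exact hF hxk hxk1 (by linarith [ht.2]) ht.1 (by ring)
  -- Taylor bound
  have key : ‖g xk1 - g xk - A d‖ ≤ L / 2 * ‖d‖ ^ 2 := by
    set h : ℝ → EuclideanSpace ℝ (Fin n) := fun t => g (xk + t • d) - t • (A d) with hh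
    set h' : ℝ → EuclideanSpace ℝ (Fin n) :=
      fun t => (fderiv ℝ g (xk + t • d)) d - A d with hh'
    have hderiv : ∀ t : ℝ, HasDerivAt h (h' t) t := by
      intro t
      have hline : HasDerivAt (fun t : ℝ => xk + t • d) d t := by
        have := ((hasDerivAt_id t).smul_const d).const_add xk
        simpa using this
      have h1 : HasDerivAt (fun t : ℝ => g (xk + t • d))
          ((fderiv ℝ g (xk + t • d)) d) t :=
        (hgd (xk + t • d)).hasFDerivAt.comp_hasDerivAt (f := fun t : ℝ => xk + t • d) t hline
      have h2 : HasDerivAt (fun t : ℝ => t • (A d)) (A d) t := by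
        simpa using (hasDerivAt_id t).smul_const (A d)
      exact h1.sub h2
    have hB : ∀ t : ℝ, HasDerivAt (fun t => L * ‖d‖ ^ 2 * t ^ 2 / 2)
        (L * ‖d‖ ^ 2 * t) t := by
      intro t
      have := ((hasDerivAt_pow 2 t).const_mul (L * ‖d‖ ^ 2)).div_const 2
      rw [show L * ‖d‖ ^ 2 * t = L * ‖d‖ ^ 2 * (((2:ℕ):ℝ) * t ^ (2 - 1 : ℕ)) / 2 by
        rw [show (2 - 1 : ℕ) = 1 from rfl, pow_one]; push_cast; ring]
      exact this
    have bound : ∀ t ∈ Set.Ico (0:ℝ) 1, ‖h' t‖ ≤ L * ‖d‖ ^ 2 * t := by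
      intro t ht
      have hy : xk + t • d ∈ F := hmem t ⟨ht.1, le_of_lt ht.2⟩
      have h1 : ‖h' t‖ ≤ ‖fderiv ℝ g (xk + t • d) - A‖ * ‖d‖ := by
        rw [hh']
        calc ‖(fderiv ℝ g (xk + t • d)) d - A d‖
            = ‖(fderiv ℝ g (xk + t • d) - A) d‖ := by
              rw [ContinuousLinearMap.sub_apply]
          _ ≤ ‖fderiv ℝ g (xk + t • d) - A‖ * ‖d‖ :=
            (fderiv ℝ g (xk + t • d) - A).le_opNorm d
      have h2 : ‖fderiv ℝ g (xk + t • d) - A‖ ≤ L * (t * ‖d‖) := by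
        have hLb := hLip (xk + t • d) hy xk hxk
        rw [show xk + t • d - xk = t • d from add_sub_cancel_left xk (t • d),
          norm_smul, Real.norm_eq_abs, abs_of_nonneg ht.1] at hLb
        exact hLb
      calc ‖h' t‖ ≤ L * (t * ‖d‖) * ‖d‖ := by
            refine h1.trans ?_
            exact mul_le_mul_of_nonneg_right h2 (norm_nonneg d)
        _ = L * ‖d‖ ^ 2 * t := by ring
    have main := image_norm_le_of_norm_deriv_right_le_deriv_boundary
      (f := fun t => h t - h 0) (f' := h') (a := 0) (b := 1)
      (B := fun t => L * ‖d‖ ^ 2 * t ^ 2 / 2) (B' := fun t => L * ‖d‖ ^ 2 * t)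
      (fun t _ => ((hderiv t).sub_const (h 0)).continuousAt.continuousWithinAt)
      (fun t _ => ((hderiv t).sub_const (h 0)).hasDerivWithinAt)
      (by simp) hB bound (Set.right_mem_Icc.2 zero_le_one)
    have e1 : h 1 - h 0 = g xk1 - g xk - A d := by
      show g (xk + (1:ℝ) • d) - (1:ℝ) • (A d) - (g (xk + (0:ℝ) • d) - (0:ℝ) • (A d))
        = g xk1 - g xk - A d
      rw [one_smul, one_smul, zero_smul, zero_smul, sub_zero, add_zero,
        show xk + d = xk1 by rw [hd]; abel]
      exact sub_right_comm (g xk1) (A d) (g xk)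
    rw [e1] at main
    calc ‖g xk1 - g xk - A d‖ ≤ L * ‖d‖ ^ 2 * 1 ^ 2 / 2 := main
      _ = L / 2 * ‖d‖ ^ 2 := by ring
  -- combine with stationarity
  have hstat' : g xk + A d = -((σ / 2 * ‖d‖) • d) :=
    eq_neg_of_add_eq_zero_left hstat
  have hgx1 : ‖g xk1‖ ≤ 3 / 2 * L * ‖d‖ ^ 2 := by
    have e : g xk1 = (g xk1 - g xk - A d) + (g xk + A d) := by module
    have tri : ‖g xk1‖ ≤ ‖g xk1 - g xk - A d‖ + ‖g xk + A d‖ := by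
      have h0 := norm_add_le (g xk1 - g xk - A d) (g xk + A d)
      rw [← e] at h0; exact h0
    calc ‖g xk1‖ ≤ ‖g xk1 - g xk - A d‖ + ‖g xk + A d‖ := tri
      _ ≤ L / 2 * ‖d‖ ^ 2 + σ / 2 * ‖d‖ ^ 2 := by
          refine add_le_add key ?_
          rw [hstat', norm_neg, norm_smul, Real.norm_eq_abs,
            abs_of_nonneg (by positivity : (0:ℝ) ≤ σ / 2 * ‖d‖)]
          exact le_of_eq (by ring)
      _ ≤ 3 / 2 * L * ‖d‖ ^ 2 := by nlinarith [sq_nonneg ‖d‖, norm_nonneg d]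
  calc Metric.infDist xk1 X ≤ κ * ‖g xk1‖ := hEB
    _ ≤ κ * (3 / 2 * L * ‖d‖ ^ 2) := by
        exact mul_le_mul_of_nonneg_left hgx1 (le_of_lt hκ)
    _ = 3 / 2 * κ * L * ‖xk1 - xk‖ ^ 2 := by rw [hd]; ring
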